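/- Localization of the fundamental group: let z be a 1-cocycle of a poset K of diamonds of a globally hyperbolic spacetime with values in an observable net R satisfying Haag duality, such that z(b) ∈ R(|b|) for every 1-simplex b. Then for any loop ℓ based at a 0-simplex a, z(ℓ) ∈ R(a). Consequently the von Neumann algebra generated by {z(ℓ) : ℓ a loop at a} is contained in R(a). -/

import Mathlib

/-- A 1-simplex of a poset `K`: two faces and a support dominating both. -/
structure OneSimplex (K : Type*) [PartialOrder K] where
  face0 : K
  face1 : K
  supp : K
  le0 : face0 ≤ supp
  le1 : face1 ≤ supp

/-- The reverse of a 1-simplex: same support, exchanged faces. -/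
def OneSimplex.rev {K : Type*} [PartialOrder K] (b : OneSimplex K) : OneSimplex K :=
  ⟨b.face1, b.face0, b.supp, b.le1, b.le0⟩

/-- The degenerate 1-simplex `σ₀ a` at a 0-simplex `a`. -/
def OneSimplex.degenerate {K : Type*} [PartialOrder K] (a : K) : OneSimplex K :=
  ⟨a, a, a, le_refl a, le_refl a⟩

/-- A 2-simplex of a poset `K`, presented by its three vertices, the supports of its
three faces, and its own support, with all required order relations. Its faces
`∂₀c, ∂₁c, ∂₂c` satisfy the simplicial identities by construction. -/
structure TwoSimplex (K : Type*) [PartialOrder K] where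
  vstart : K
  vmid : K
  vend : K
  s0 : K
  s1 : K
  s2 : K
  supp : K
  hs0 : s0 ≤ supp
  hs1 : s1 ≤ supp
  hs2 : s2 ≤ supp
  h0s : vmid ≤ s0
  h0e : vend ≤ s0
  h1s : vstart ≤ s1
  h1e : vend ≤ s1
  h2s : vstart ≤ s2
  h2e : vmid ≤ s2

/-- The face `∂₀c` (from `vmid` to `vend`). -/
def TwoSimplex.face0 {K : Type*} [PartialOrder K] (c : TwoSimplex K) : OneSimplex K :=
  ⟨c.vend, c.vmid, c.s0, c.h0e, c.h0s⟩

/-- The face `∂₁c` (from `vstart` to `vend`). -/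
def TwoSimplex.face1 {K : Type*} [PartialOrder K] (c : TwoSimplex K) : OneSimplex K :=
  ⟨c.vend, c.vstart, c.s1, c.h1e, c.h1s⟩

/-- The face `∂₂c` (from `vstart` to `vmid`). -/
def TwoSimplex.face2 {K : Type*} [PartialOrder K] (c : TwoSimplex K) : OneSimplex K :=
  ⟨c.vmid, c.vstart, c.s2, c.h2e, c.h2s⟩

/-- A path in the poset `K` from `x` to `y`: a nonempty composable string of
1-simplices, `∂₁` of the first being `x` and `∂₀` of the last being `y`. -/
inductive PPath (K : Type*) [PartialOrder K] : K → K → Type _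
  | single (b : OneSimplex K) : PPath K b.face1 b.face0
  | cons (b : OneSimplex K) {x : K} (p : PPath K x b.face1) : PPath K x b.face0

/-- Composition of paths: `q.comp p` first traverses `p`, then `q`. -/
def PPath.comp {K : Type*} [PartialOrder K] : ∀ {x y w : K}, PPath K y w → PPath K x y → PPath K x w
  | _, _, _, .single b, p => .cons b p
  | _, _, _, .cons b q, p => .cons b (q.comp p)

/-- The reverse of a path. -/
def PPath.rev {K : Type*} [PartialOrder K] : ∀ {x y : K}, PPath K x y → PPath K y x
  | _, _, .single b => .single b.rev
  | _, _, .cons b p => PPath.comp p.rev (.single b.rev)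

/-- Multiplicative extension of a function on 1-simplices to paths:
`z(bₙ * ⋯ * b₁) = z(bₙ) ⋯ z(b₁)`. -/
def PPath.eval {K : Type*} [PartialOrder K] {M : Type*} [Monoid M]
    (z : OneSimplex K → M) : ∀ {x y : K}, PPath K x y → M
  | _, _, .single b => z b
  | _, _, .cons b p => z b * p.eval z

/-- The support of the path is causally disjoint from `o` (every 1-simplex of the path
has support `⊥ o`). -/
def PPath.suppDisjoint {K : Type*} [PartialOrder K] (perp : K → K → Prop) (o : K) :
    ∀ {x y : K}, PPath K x y → Prop
  | _, _, .single b => perp b.supp o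
  | _, _, .cons b p => perp b.supp o ∧ p.suppDisjoint perp o

/-- Homotopy of paths with the same endpoints: the equivalence relation generated by
elementary deformations (replacing `∂₁c` by `∂₀c * ∂₂c` for a 2-simplex `c`), compatible
with composition. -/
inductive PHomotopic {K : Type*} [PartialOrder K] : ∀ {x y : K}, PPath K x y → PPath K x y → Prop
  | refl {x y : K} (p : PPath K x y) : PHomotopic p p
  | symm {x y : K} {p q : PPath K x y} : PHomotopic p q → PHomotopic q p
  | trans {x y : K} {p q r : PPath K x y} : PHomotopic p q → PHomotopic q r → PHomotopic p r
  | deform (c : TwoSimplex K) :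
      PHomotopic (.single c.face1) ((PPath.single c.face0).comp (.single c.face2))
  | comp_congr {x y w : K} {q q' : PPath K y w} {p p' : PPath K x y} :
      PHomotopic q q' → PHomotopic p p' → PHomotopic (q.comp p) (q'.comp p')


lemma eval_comp {K : Type*} [PartialOrder K] {M : Type*} [Monoid M] (z : OneSimplex K → M) :
    ∀ {x y w : K} (q : PPath K y w) (p : PPath K x y),
      (q.comp p).eval z = q.eval z * p.eval z
  | _, _, _, .single b, p => rfl
  | _, _, _, .cons b q, p => by
      show z b * (q.comp p).eval z = (z b * q.eval z) * p.eval z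
      rw [eval_comp z q p, mul_assoc]

lemma eval_homotopic {K : Type*} [PartialOrder K] {M : Type*} [Monoid M]
    (z : OneSimplex K → M)
    (hzc : ∀ c : TwoSimplex K, z c.face0 * z c.face2 = z c.face1)
    {x y : K} {p q : PPath K x y} (h : PHomotopic p q) : p.eval z = q.eval z := by
  induction h with
  | refl => rfl
  | symm _ ih => exact ih.symm
  | trans _ _ ih1 ih2 => exact ih1.trans ih2
  | deform c => show z c.face1 = _; exact (hzc c).symm
  | comp_congr _ _ ih1 ih2 => rw [eval_comp, eval_comp, ih1, ih2]

lemma eval_mem_commutant {K : Type*} [PartialOrder K]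
    {H : Type*} [NormedAddCommGroup H] [InnerProductSpace ℂ H] [CompleteSpace H]
    (perp : K → K → Prop) (hsymm : ∀ x y : K, perp x y → perp y x)
    (R : K → VonNeumannAlgebra H)
    (hhaag : ∀ a : K, (R a : Set (H →L[ℂ] H)) =
        ⋂ (b : K), ⋂ (_ : perp b a), ((R b).commutant : Set (H →L[ℂ] H)))
    (z : OneSimplex K → (H →L[ℂ] H))
    (hloc : ∀ b : OneSimplex K, z b ∈ R b.supp) (o : K) :
    ∀ {x y : K} (p : PPath K x y), p.suppDisjoint perp o →
      p.eval z ∈ (R o).commutant := by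
  have hb : ∀ b : OneSimplex K, perp b.supp o → z b ∈ (R o).commutant := by
    intro b hbo
    have h1 : z b ∈ (R b.supp : Set (H →L[ℂ] H)) := hloc b
    rw [hhaag b.supp] at h1
    exact Set.mem_iInter₂.mp h1 o (hsymm _ _ hbo)
  intro x y p
  induction p with
  | single b => exact fun hd => hb b hd
  | cons b p ih => exact fun hd => mul_mem (hb b hd.1) (ih hd.2)

theorem localization_of_fundamental_group {K : Type*} [PartialOrder K]
    {H : Type*} [NormedAddCommGroup H] [InnerProductSpace ℂ H] [CompleteSpace H]
    (perp : K → K → Prop)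
    (hsymm : ∀ x y : K, perp x y → perp y x)
    (R : K → VonNeumannAlgebra H)
    (hiso : ∀ ⦃a b : K⦄, a ≤ b → (R a : Set (H →L[ℂ] H)) ⊆ (R b : Set (H →L[ℂ] H)))
    (hhaag : ∀ a : K, (R a : Set (H →L[ℂ] H)) =
        ⋂ (b : K), ⋂ (_ : perp b a), ((R b).commutant : Set (H →L[ℂ] H)))
    (hccconn : ∀ (o x y : K), perp x o → perp y o →
        ∃ q : PPath K x y, q.suppDisjoint perp o)
    (hdef : ∀ (a o : K), perp a o → ∀ ℓ : PPath K a a,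
        ∃ ℓ' : PPath K a a, PHomotopic ℓ ℓ' ∧ ℓ'.suppDisjoint perp o)
    (z : OneSimplex K → (H →L[ℂ] H))
    (hzu : ∀ b : OneSimplex K, z b ∈ unitary (H →L[ℂ] H))
    (hzc : ∀ c : TwoSimplex K, z c.face0 * z c.face2 = z c.face1)
    (hloc : ∀ b : OneSimplex K, z b ∈ R b.supp) :
    ∀ a : K,
      (∀ ℓ : PPath K a a, ℓ.eval z ∈ R a) ∧
      Set.centralizer (Set.centralizer
          {T : H →L[ℂ] H | ∃ ℓ : PPath K a a, ℓ.eval z = T}) ⊆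
        (R a : Set (H →L[ℂ] H)) := by
  intro a
  have key : ∀ ℓ : PPath K a a, ℓ.eval z ∈ R a := by
    intro ℓ
    have : ℓ.eval z ∈ (R a : Set (H →L[ℂ] H)) := by
      rw [hhaag a]
      refine Set.mem_iInter₂.mpr fun b hba => ?_
      obtain ⟨ℓ', hhom, hdis⟩ := hdef a b (hsymm _ _ hba) ℓ
      rw [eval_homotopic z hzc hhom]
      exact eval_mem_commutant perp hsymm R hhaag z hloc b ℓ' hdis
    exact this
  refine ⟨key, ?_⟩
  have h1 : {T : H →L[ℂ] H | ∃ ℓ : PPath K a a, ℓ.eval z = T} ⊆ (R a : Set (H →L[ℂ] H)) := by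
    rintro T ⟨ℓ, rfl⟩
    exact key ℓ
  calc Set.centralizer (Set.centralizer {T : H →L[ℂ] H | ∃ ℓ : PPath K a a, ℓ.eval z = T})
      ⊆ Set.centralizer (Set.centralizer (R a : Set (H →L[ℂ] H))) :=
        Set.centralizer_subset (Set.centralizer_subset h1)
    _ = (R a : Set (H →L[ℂ] H)) := (R a).centralizer_centralizer'
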